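/- arXiv:1910.02282 — 2 statements merged into one kernel-verified Lean document; each statement's English description precedes it below -/
import Mathlib

section
/- Let N_c, N_cs ≥ 1 count the bulk and surface species and N, N_s ≥ 1 be the numbers of bulk and surface degrees of freedom. For each t ∈ ℝ let M_Ω(t), B(t), K(t) ∈ ℝ^{N×N} and M_s(t), B_s(t), K_s(t) ∈ ℝ^{N_s×N_s}; for each p ∈ {1,…,N_c} let C^{(p)}, R^{(p)}, F^{(p)} : ℝ → ℝ^N with t ↦ M_Ω(t)C^{(p)}(t) differentiable, and for each q ∈ {1,…,N_cs} let C_s^{(q)}, R_s^{(q)}, F_s^{(q)} : ℝ → ℝ^{N_s} with t ↦ M_s(t)C_s^{(q)}(t) differentiable. Assume that for all t: (i) for each p the bulk semi-discrete system (d/dt)[M_Ω C^{(p)}] + (B + K)C^{(p)} − R^{(p)} = F^{(p)} holds (the boundary matrix A_Γ having vanished because the ALE velocity and material velocity of the curve have equal normal components); (ii) for each q the surface semi-discrete system (d/dt)[M_s C_s^{(q)}] + (K_s − B_s)C_s^{(q)} + R_s^{(q)} = F_s^{(q)} holds; (iii) the column sums of B(t), K(t), B_s(t), K_s(t) all vanish;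 (iv) ∑_{p=1}^{N_c} e^T R^{(p)}(t) = ∑_{q=1}^{N_cs} e_s^T R_s^{(q)}(t); (v) ∑_{p=1}^{N_c} e^T F^{(p)}(t) = 0 and ∑_{q=1}^{N_cs} e_s^T F_s^{(q)}(t) = 0. Then the total discrete mass is conserved: for every t, (d/dt)[ ∑_{p=1}^{N_c} e^T M_Ω(t) C^{(p)}(t) + ∑_{q=1}^{N_cs} e_s^T M_s(t) C_s^{(q)}(t) ] = 0. -/
/-- If a matrix has vanishing column sums, the entries of `M.mulVec v` sum to zero. -/
lemma colsum_mulVec_zero {n : ℕ} (M : Matrix (Fin n) (Fin n) ℝ) (v : Fin n → ℝ)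
    (h : ∀ μ, (∑ ν, M ν μ) = 0) : (∑ ν, M.mulVec v ν) = 0 := by
  simp only [Matrix.mulVec, dotProduct]
  rw [Finset.sum_comm]
  simp [← Finset.sum_mul, h]

/-- Global conservation for the semi-discrete bulk-surface ALE finite element
system, independently of the ALE velocity. -/
theorem semidiscrete_global_conservation
    (Nc Ncs N Ns : ℕ) (hNc : 1 ≤ Nc) (hNcs : 1 ≤ Ncs) (hN : 1 ≤ N) (hNs : 1 ≤ Ns)
    (MΩ B K : ℝ → Matrix (Fin N) (Fin N) ℝ)
    (Ms Bs Ks : ℝ → Matrix (Fin Ns) (Fin Ns) ℝ)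
    (C R F : Fin Nc → ℝ → Fin N → ℝ)
    (Cs Rs Fs : Fin Ncs → ℝ → Fin Ns → ℝ)
    (hdiffb : ∀ p, Differentiable ℝ (fun t => (MΩ t).mulVec (C p t)))
    (hdiffs : ∀ q, Differentiable ℝ (fun t => (Ms t).mulVec (Cs q t)))
    (hbulk : ∀ p t, deriv (fun t => (MΩ t).mulVec (C p t)) t
      + (B t + K t).mulVec (C p t) - R p t = F p t)
    (hsurf : ∀ q t, deriv (fun t => (Ms t).mulVec (Cs q t)) t
      + (Ks t - Bs t).mulVec (Cs q t) + Rs q t = Fs q t)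
    (hB : ∀ t μ, (∑ ν, B t ν μ) = 0)
    (hK : ∀ t μ, (∑ ν, K t ν μ) = 0)
    (hBs : ∀ t μ, (∑ ν, Bs t ν μ) = 0)
    (hKs : ∀ t μ, (∑ ν, Ks t ν μ) = 0)
    (hR : ∀ t, (∑ p, ∑ ν, R p t ν) = ∑ q, ∑ ν, Rs q t ν)
    (hF : ∀ t, (∑ p, ∑ ν, F p t ν) = 0)
    (hFs : ∀ t, (∑ q, ∑ ν, Fs q t ν) = 0)
    (t : ℝ) :
    deriv (fun t => (∑ p, ∑ ν, (MΩ t).mulVec (C p t) ν)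
      + ∑ q, ∑ ν, (Ms t).mulVec (Cs q t) ν) t = 0 := by
  -- componentwise derivatives
  have hbD : ∀ (p : Fin Nc) (ν : Fin N),
      HasDerivAt (fun t => (MΩ t).mulVec (C p t) ν)
        (deriv (fun t => (MΩ t).mulVec (C p t)) t ν) t := fun p ν =>
    (hasDerivAt_pi.mp ((hdiffb p t).hasDerivAt)) ν
  have hsD : ∀ (q : Fin Ncs) (ν : Fin Ns),
      HasDerivAt (fun t => (Ms t).mulVec (Cs q t) ν)
        (deriv (fun t => (Ms t).mulVec (Cs q t)) t ν) t := fun q ν =>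
    (hasDerivAt_pi.mp ((hdiffs q t).hasDerivAt)) ν
  have hmain : HasDerivAt (fun t => (∑ p, ∑ ν, (MΩ t).mulVec (C p t) ν)
      + ∑ q, ∑ ν, (Ms t).mulVec (Cs q t) ν)
      ((∑ p, ∑ ν, deriv (fun t => (MΩ t).mulVec (C p t)) t ν)
      + ∑ q, ∑ ν, deriv (fun t => (Ms t).mulVec (Cs q t)) t ν) t := by
    refine HasDerivAt.add ?_ ?_
    · exact HasDerivAt.fun_sum fun p _ => HasDerivAt.fun_sum fun ν _ => hbD p ν
    · exact HasDerivAt.fun_sum fun q _ => HasDerivAt.fun_sum fun ν _ => hsD q ν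
  rw [hmain.deriv]
  -- compute the value of the derivative
  have hb : ∀ p : Fin Nc, (∑ ν, deriv (fun t => (MΩ t).mulVec (C p t)) t ν)
      = (∑ ν, F p t ν) + ∑ ν, R p t ν := by
    intro p
    have h := hbulk p t
    have hd : deriv (fun t => (MΩ t).mulVec (C p t)) t
        = F p t + R p t - (B t + K t).mulVec (C p t) := by
      rw [← h]; abel
    rw [hd]
    have hz : (∑ ν, (B t + K t).mulVec (C p t) ν) = 0 := by
      apply colsum_mulVec_zero
      intro μ
      simp [Matrix.add_apply, Finset.sum_add_distrib, hB t μ, hK t μ]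
    simp [Pi.add_apply, Pi.sub_apply, Finset.sum_add_distrib, Finset.sum_sub_distrib, hz]
  have hs : ∀ q : Fin Ncs, (∑ ν, deriv (fun t => (Ms t).mulVec (Cs q t)) t ν)
      = (∑ ν, Fs q t ν) - ∑ ν, Rs q t ν := by
    intro q
    have h := hsurf q t
    have hd : deriv (fun t => (Ms t).mulVec (Cs q t)) t
        = Fs q t - Rs q t - (Ks t - Bs t).mulVec (Cs q t) := by
      rw [← h]; abel
    rw [hd]
    have hz : (∑ ν, (Ks t - Bs t).mulVec (Cs q t) ν) = 0 := by
      apply colsum_mulVec_zero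
      intro μ
      simp [Matrix.sub_apply, Finset.sum_sub_distrib, hKs t μ, hBs t μ]
    simp [Pi.sub_apply, Finset.sum_sub_distrib, hz]
  simp only [hb, hs, Finset.sum_add_distrib, Finset.sum_sub_distrib]
  rw [hF t, hFs t, hR t]
  ring
end

section
/- Let N_c, N_cs ≥ 1 count the bulk and surface species, N, N_s ≥ 1 be the numbers of bulk and surface degrees of freedom, and Δt ∈ ℝ. Let M, B, K, M', B', K' ∈ ℝ^{N×N} be bulk matrices at time levels n and n+1, and M_s, B_s, K_s, M_s', B_s', K_s' ∈ ℝ^{N_s×N_s} be surface matrices at time levels n and n+1. For each p ∈ {1,…,N_c} let C^{(p)}, C'^{(p)}, R^{(p)}, R'^{(p)}, F^{(p)}, F'^{(p)} ∈ ℝ^N, and for each q ∈ {1,…,N_cs} let C_s^{(q)}, C̃_s^{(q)}, C_s'^{(q)}, R_s^{(q)}, R_s'^{(q)}, F_s^{(q)}, F_s'^{(q)} ∈ ℝ^{N_s}. Assume: (i) predictor step: for each q, (M_s' + Δt(K_s' − B_s')) C̃_s^{(q)} = M_s C_s^{(q)} − Δt (R_s^{(q)} − F_s^{(q)}); (ii)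 Crank–Nicolson bulk step: for each p, (M' + (Δt/2)(B' + K')) C'^{(p)} = (M − (Δt/2)(B + K)) C^{(p)} + (Δt/2)(R'^{(p)} + R^{(p)}) + (Δt/2)(F'^{(p)} + F^{(p)}); (iii) corrector step: for each q, (M_s' + (Δt/2)(K_s' − B_s')) C_s'^{(q)} = (M_s − (Δt/2)(K_s − B_s)) C_s^{(q)} + (Δt/2)(F_s'^{(q)} + F_s^{(q)}) − (Δt/2)(R_s'^{(q)} + R_s^{(q)}); (iv) the column sums of B, K, B', K', B_s, K_s, B_s', K_s' all vanish; (v) ∑_{p=1}^{N_c} e^T R^{(p)} = ∑_{q=1}^{N_cs} e_s^T R_s^{(q)} and ∑_{p=1}^{N_c} e^T R'^{(p)} = ∑_{q=1}^{N_cs} e_s^T R_s'^{(q)}; (vi) ∑_{p=1}^{N_c} e^T F^{(p)} = 0, ∑_{p=1}^{N_c} e^T F'^{(p)} = 0, ∑_{q=1}^{N_cs} e_s^T F_s^{(q)} = 0 and ∑_{q=1}^{N_cs} e_s^T F_s'^{(q)} = 0. Then the total discrete mass is conserved over the time step: ∑_{p=1}^{N_c} e^T M' C'^{(p)} + ∑_{q=1}^{N_cs}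 e_s^T M_s' C_s'^{(q)} = ∑_{p=1}^{N_c} e^T M C^{(p)} + ∑_{q=1}^{N_cs} e_s^T M_s C_s^{(q)}, independently of the ALE velocity, the predicted solutions C̃_s^{(q)} and the time step size Δt. -/
open Finset

lemma colsum_mulVec {n : ℕ} (A : Matrix (Fin n) (Fin n) ℝ) (v : Fin n → ℝ)
    (h : ∀ μ, (∑ ν, A ν μ) = 0) : (∑ ν, A.mulVec v ν) = 0 := by
  simp only [Matrix.mulVec, dotProduct]
  rw [Finset.sum_comm]
  simp [← Finset.sum_mul, h]

/-- Global conservation of the fully discrete two-stage modified Crank-Nicolson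
ALE finite element scheme, independently of the ALE velocity, the predicted
solutions and the time step size. -/
theorem fully_discrete_global_conservation
    (Nc Ncs N Ns : ℕ) (hNc : 1 ≤ Nc) (hNcs : 1 ≤ Ncs) (hN : 1 ≤ N) (hNs : 1 ≤ Ns)
    (Δt : ℝ)
    (M B K M' B' K' : Matrix (Fin N) (Fin N) ℝ)
    (Ms Bs Ks Ms' Bs' Ks' : Matrix (Fin Ns) (Fin Ns) ℝ)
    (C C' R R' F F' : Fin Nc → Fin N → ℝ)
    (Cs Cst Cs' Rs Rs' Fs Fs' : Fin Ncs → Fin Ns → ℝ)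
    (hpred : ∀ q, (Ms' + Δt • (Ks' - Bs')).mulVec (Cst q)
      = Ms.mulVec (Cs q) - Δt • (Rs q - Fs q))
    (hbulk : ∀ p, (M' + (Δt / 2) • (B' + K')).mulVec (C' p)
      = (M - (Δt / 2) • (B + K)).mulVec (C p)
        + (Δt / 2) • (R' p + R p) + (Δt / 2) • (F' p + F p))
    (hcorr : ∀ q, (Ms' + (Δt / 2) • (Ks' - Bs')).mulVec (Cs' q)
      = (Ms - (Δt / 2) • (Ks - Bs)).mulVec (Cs q)
        + (Δt / 2) • (Fs' q + Fs q) - (Δt / 2) • (Rs' q + Rs q))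
    (hB : ∀ μ, (∑ ν, B ν μ) = 0) (hK : ∀ μ, (∑ ν, K ν μ) = 0)
    (hB' : ∀ μ, (∑ ν, B' ν μ) = 0) (hK' : ∀ μ, (∑ ν, K' ν μ) = 0)
    (hBs : ∀ μ, (∑ ν, Bs ν μ) = 0) (hKs : ∀ μ, (∑ ν, Ks ν μ) = 0)
    (hBs' : ∀ μ, (∑ ν, Bs' ν μ) = 0) (hKs' : ∀ μ, (∑ ν, Ks' ν μ) = 0)
    (hR : (∑ p, ∑ ν, R p ν) = ∑ q, ∑ ν, Rs q ν)
    (hR' : (∑ p, ∑ ν, R' p ν) = ∑ q, ∑ ν, Rs' q ν)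
    (hF : (∑ p, ∑ ν, F p ν) = 0) (hF' : (∑ p, ∑ ν, F' p ν) = 0)
    (hFs : (∑ q, ∑ ν, Fs q ν) = 0) (hFs' : (∑ q, ∑ ν, Fs' q ν) = 0) :
    (∑ p, ∑ ν, M'.mulVec (C' p) ν) + (∑ q, ∑ ν, Ms'.mulVec (Cs' q) ν)
      = (∑ p, ∑ ν, M.mulVec (C p) ν) + (∑ q, ∑ ν, Ms.mulVec (Cs q) ν) := by
  have bulk : ∀ p, (∑ ν, M'.mulVec (C' p) ν)
      = (∑ ν, M.mulVec (C p) ν)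
        + (Δt / 2) * ((∑ ν, R' p ν) + (∑ ν, R p ν))
        + (Δt / 2) * ((∑ ν, F' p ν) + (∑ ν, F p ν)) := by
    intro p
    have h := congrArg (fun v => ∑ ν, v ν) (hbulk p)
    simp only [Matrix.add_mulVec, Matrix.sub_mulVec, Matrix.smul_mulVec,
      Pi.add_apply, Pi.sub_apply, Pi.smul_apply, smul_eq_mul,
      Finset.sum_add_distrib, Finset.sum_sub_distrib, ← Finset.mul_sum] at h
    have z1 := colsum_mulVec B' (C' p) hB'
    have z2 := colsum_mulVec K' (C' p) hK'
    have z3 := colsum_mulVec B (C p) hB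
    have z4 := colsum_mulVec K (C p) hK
    rw [z1, z2, z3, z4] at h
    linarith [h]
  have surf : ∀ q, (∑ ν, Ms'.mulVec (Cs' q) ν)
      = (∑ ν, Ms.mulVec (Cs q) ν)
        + (Δt / 2) * ((∑ ν, Fs' q ν) + (∑ ν, Fs q ν))
        - (Δt / 2) * ((∑ ν, Rs' q ν) + (∑ ν, Rs q ν)) := by
    intro q
    have h := congrArg (fun v => ∑ ν, v ν) (hcorr q)
    simp only [Matrix.add_mulVec, Matrix.sub_mulVec, Matrix.smul_mulVec,
      Pi.add_apply, Pi.sub_apply, Pi.smul_apply, smul_eq_mul,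
      Finset.sum_add_distrib, Finset.sum_sub_distrib, ← Finset.mul_sum] at h
    have z1 := colsum_mulVec Bs' (Cs' q) hBs'
    have z2 := colsum_mulVec Ks' (Cs' q) hKs'
    have z3 := colsum_mulVec Bs (Cs q) hBs
    have z4 := colsum_mulVec Ks (Cs q) hKs
    rw [z1, z2, z3, z4] at h
    linarith [h]
  have hb : (∑ p, ∑ ν, M'.mulVec (C' p) ν)
      = (∑ p, ∑ ν, M.mulVec (C p) ν)
        + (Δt / 2) * ((∑ p, ∑ ν, R' p ν) + (∑ p, ∑ ν, R p ν))
        + (Δt / 2) * ((∑ p, ∑ ν, F' p ν) + (∑ p, ∑ ν, F p ν)) := by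
    rw [Finset.sum_congr rfl (fun p _ => bulk p)]
    rw [Finset.sum_add_distrib, Finset.sum_add_distrib, ← Finset.mul_sum,
      ← Finset.mul_sum, Finset.sum_add_distrib, Finset.sum_add_distrib]
  have hs : (∑ q, ∑ ν, Ms'.mulVec (Cs' q) ν)
      = (∑ q, ∑ ν, Ms.mulVec (Cs q) ν)
        + (Δt / 2) * ((∑ q, ∑ ν, Fs' q ν) + (∑ q, ∑ ν, Fs q ν))
        - (Δt / 2) * ((∑ q, ∑ ν, Rs' q ν) + (∑ q, ∑ ν, Rs q ν)) := by
    rw [Finset.sum_congr rfl (fun q _ => surf q)]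
    rw [Finset.sum_sub_distrib, Finset.sum_add_distrib, ← Finset.mul_sum,
      ← Finset.mul_sum, Finset.sum_add_distrib, Finset.sum_add_distrib]
  rw [hb, hs, hR, hR', hF, hF', hFs, hFs']
  ring
end
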